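/- Let d1, d2 be positive natural numbers, let δt > 0, ε > 0, B ≥ 0 be real numbers, and let Λ be the (d1+d2)×(d1+d2) block-diagonal matrix with blocks I_{d1} and (1/ε)·I_{d2}. For i ∈ {1,2}, let z_i = (θ̄_i, η̄_i) ∈ ℝ^{d1} × ℝ^{d2} and let C_i = δt·Λ². If ‖η̄_1 − η̄_2‖ ≤ B, then | d(z_1, z_2) − (1/δt)·‖θ̄_1 − θ̄_2‖² | ≤ ε²·B²/δt. In particular, for bounded noise baselines the modified Mahalanobis distance equals (1/δt)[‖θ̄_1 − θ̄_2‖² + O(ε²)]. -/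

import Mathlib

open Matrix

/-- Proposition 1 (quantitative form): for bounded noise baselines, the modified
Mahalanobis distance between the features `zᵢ = (θᵢ, ηᵢ)` with covariances
`Cᵢ = δt·Λ²` equals `(1/δt)‖θ₁ − θ₂‖²` up to an error of at most `ε²B²/δt`. -/
theorem stmt_1 (d1 d2 : ℕ) (hd1 : 0 < d1) (hd2 : 0 < d2)
    (δt ε B : ℝ) (hδt : 0 < δt) (hε : 0 < ε) (hB : 0 ≤ B)
    (θ₁ θ₂ : EuclideanSpace ℝ (Fin d1)) (η₁ η₂ : EuclideanSpace ℝ (Fin d2))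
    (hη : ‖η₁ - η₂‖ ≤ B) :
    let Λ : Matrix (Fin d1 ⊕ Fin d2) (Fin d1 ⊕ Fin d2) ℝ :=
      Matrix.fromBlocks 1 0 0 ((1 / ε) • 1)
    let C₁ : Matrix (Fin d1 ⊕ Fin d2) (Fin d1 ⊕ Fin d2) ℝ := δt • (Λ * Λ)
    let C₂ : Matrix (Fin d1 ⊕ Fin d2) (Fin d1 ⊕ Fin d2) ℝ := δt • (Λ * Λ)
    let z₁ : Fin d1 ⊕ Fin d2 → ℝ := Sum.elim (fun k => θ₁ k) (fun k => η₁ k)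
    let z₂ : Fin d1 ⊕ Fin d2 → ℝ := Sum.elim (fun k => θ₂ k) (fun k => η₂ k)
    |(1 / 2) * ((z₁ - z₂) ⬝ᵥ ((C₁⁻¹ + C₂⁻¹) *ᵥ (z₁ - z₂))) -
        (1 / δt) * ‖θ₁ - θ₂‖ ^ 2| ≤ ε ^ 2 * B ^ 2 / δt := by
  intro Λ C₁ C₂ z₁ z₂
  have hεne : ε ≠ 0 := ne_of_gt hε
  have hδne : δt ≠ 0 := ne_of_gt hδt
  set D : Matrix (Fin d1 ⊕ Fin d2) (Fin d1 ⊕ Fin d2) ℝ :=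
    Matrix.fromBlocks 1 0 0 ((ε ^ 2) • 1) with hD
  have hinv : C₁⁻¹ = (1 / δt) • D := by
    apply Matrix.inv_eq_right_inv
    show (δt • (Λ * Λ)) * ((1 / δt) • D) = 1
    rw [Matrix.smul_mul, Matrix.mul_smul, smul_smul]
    have : δt * (1 / δt) = 1 := by field_simp; try ring
    rw [this, one_smul]
    show Matrix.fromBlocks 1 0 0 ((1 / ε) • 1) * Matrix.fromBlocks 1 0 0 ((1 / ε) • 1)
        * Matrix.fromBlocks 1 0 0 ((ε ^ 2) • 1) = 1
    simp only [Matrix.fromBlocks_multiply, Matrix.mul_one, Matrix.one_mul, Matrix.mul_zero,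
      Matrix.zero_mul, add_zero, zero_add, Matrix.smul_mul, Matrix.mul_smul, smul_smul,
      Matrix.one_mul]
    have h1 : ε ^ 2 * (1 / ε * (1 / ε)) = 1 := by field_simp; try ring
    rw [smul_zero, h1, one_smul, Matrix.fromBlocks_one]
  have hv : z₁ - z₂ = Sum.elim (fun k => θ₁ k - θ₂ k) (fun k => η₁ k - η₂ k) := by
    funext i; cases i <;> simp [z₁, z₂]
  have hmul : D *ᵥ (z₁ - z₂) =
      Sum.elim (fun k => θ₁ k - θ₂ k) (fun k => ε ^ 2 * (η₁ k - η₂ k)) := by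
    rw [hv, hD, Matrix.fromBlocks_mulVec]
    funext i; cases i <;> simp [Matrix.smul_mulVec, smul_eq_mul]
  have hθ : ‖θ₁ - θ₂‖ ^ 2 = ∑ k, (θ₁ k - θ₂ k) ^ 2 := by
    rw [EuclideanSpace.norm_eq, Real.sq_sqrt (by positivity)]
    congr 1; funext k
    simp [Real.norm_eq_abs, sq_abs]
  have hηs : ‖η₁ - η₂‖ ^ 2 = ∑ k, (η₁ k - η₂ k) ^ 2 := by
    rw [EuclideanSpace.norm_eq, Real.sq_sqrt (by positivity)]
    congr 1; funext k
    simp [Real.norm_eq_abs, sq_abs]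
  have hdot : (z₁ - z₂) ⬝ᵥ ((C₁⁻¹ + C₂⁻¹) *ᵥ (z₁ - z₂)) =
      (2 / δt) * (‖θ₁ - θ₂‖ ^ 2 + ε ^ 2 * ‖η₁ - η₂‖ ^ 2) := by
    have hC₂ : C₂⁻¹ = C₁⁻¹ := rfl
    rw [hC₂, hinv, ← two_smul ℝ, smul_smul, Matrix.smul_mulVec,
      dotProduct_smul, hmul, hv, smul_eq_mul]
    simp only [dotProduct, Fintype.sum_sum_type, Sum.elim_inl, Sum.elim_inr]
    have e1 : ∑ k : Fin d1, (θ₁ k - θ₂ k) * (θ₁ k - θ₂ k) = ‖θ₁ - θ₂‖ ^ 2 := by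
      rw [hθ]; exact Finset.sum_congr rfl fun k _ => by ring
    have e2 : ∑ k : Fin d2, (η₁ k - η₂ k) * (ε ^ 2 * (η₁ k - η₂ k)) = ε ^ 2 * ‖η₁ - η₂‖ ^ 2 := by
      rw [hηs, Finset.mul_sum]; exact Finset.sum_congr rfl fun k _ => by ring
    rw [e1, e2]; ring
  rw [hdot]
  have key : (1 / 2) * ((2 / δt) * (‖θ₁ - θ₂‖ ^ 2 + ε ^ 2 * ‖η₁ - η₂‖ ^ 2)) -
      (1 / δt) * ‖θ₁ - θ₂‖ ^ 2 = ε ^ 2 * ‖η₁ - η₂‖ ^ 2 / δt := by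
    field_simp
    ring
  rw [key, abs_of_nonneg (by positivity)]
  have hb : ‖η₁ - η₂‖ ^ 2 ≤ B ^ 2 := pow_le_pow_left₀ (norm_nonneg _) hη 2
  gcongr
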